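/- Let θ > 0 and β ∈ ℝ. Let Z be Gamma-distributed with shape 1/θ and rate 1/θ, and let V₀, V₁ be Exp(1)-distributed, with Z, V₀, V₁ mutually independent. Define T⁰ = (1/θ) log((θ/Z)V₀ + 1) and T¹ = (1/(θ e^β)) log((θ/Z)V₁ + 1). Then for all s, u ≥ 0, the joint survival function satisfies P(T⁰ > s, T¹ > u) = (e^{θs} + e^{θ e^β u} − 1)^{−1/θ}. -/

import Mathlib

open MeasureTheory ProbabilityTheory Real

lemma gammaMeasure_Iic_zero (a r : ℝ) : gammaMeasure a r (Set.Iic 0) = 0 := by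
  rw [gammaMeasure, withDensity_apply _ measurableSet_Iic,
    setLIntegral_congr (Iio_ae_eq_Iic (a := (0:ℝ))).symm]
  exact lintegral_gammaPDF_of_nonpos le_rfl

lemma gammaMeasure_Iio_zero (a r : ℝ) : gammaMeasure a r (Set.Iio 0) = 0 := by
  rw [gammaMeasure, withDensity_apply _ measurableSet_Iio]
  exact lintegral_gammaPDF_of_nonpos le_rfl

lemma expMeasure_Ioi (t : ℝ) (ht : 0 ≤ t) :
    expMeasure 1 (Set.Ioi t) = ENNReal.ofReal (Real.exp (-t)) := by
  haveI := isProbabilityMeasure_expMeasure one_pos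
  have hIic : expMeasure 1 (Set.Iic t) = ENNReal.ofReal (1 - Real.exp (-t)) := by
    rw [expMeasure, gammaMeasure, withDensity_apply _ measurableSet_Iic]
    have h := lintegral_exponentialPDF_eq_antiDeriv one_pos t
    simpa [exponentialPDF, exponentialPDFReal, gammaPDF, if_pos ht] using h
  rw [← Set.compl_Iic, measure_compl measurableSet_Iic (measure_ne_top _ _), hIic, measure_univ,
    ← ENNReal.ofReal_one, ← ENNReal.ofReal_sub _ (by simp [Real.exp_le_one_iff]; linarith)]
  norm_num

lemma gamma_laplace {k r c : ℝ} (hk : 0 < k) (hr : 0 < r) (hc : 0 ≤ c) :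
    ∫⁻ z, ENNReal.ofReal (Real.exp (-(c * z))) ∂(gammaMeasure k r)
      = ENNReal.ofReal ((r / (r + c)) ^ k) := by
  have hrc : 0 < r + c := by linarith
  have hm1 : Measurable (gammaPDF k r) := (measurable_gammaPDFReal k r).ennreal_ofReal
  have hm2 : Measurable (gammaPDF k (r + c)) := (measurable_gammaPDFReal k (r+c)).ennreal_ofReal
  rw [gammaMeasure, lintegral_withDensity_eq_lintegral_mul _ hm1
    (by fun_prop : Measurable fun z => ENNReal.ofReal (Real.exp (-(c * z))))]
  have hpt : ∀ z : ℝ, (gammaPDF k r * fun z => ENNReal.ofReal (Real.exp (-(c * z)))) z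
      = ENNReal.ofReal ((r / (r + c)) ^ k) * gammaPDF k (r + c) z := by
    intro z
    simp only [Pi.mul_apply]
    rcases le_or_gt 0 z with hz | hz
    · rw [gammaPDF_of_nonneg hz, gammaPDF_of_nonneg hz,
        ← ENNReal.ofReal_mul (by positivity), ← ENNReal.ofReal_mul (by positivity)]
      congr 1
      have hE : rexp (-(r*z)) * rexp (-(c*z)) = rexp (-((r+c)*z)) := by
        rw [← Real.exp_add]; ring_nf
      rw [mul_assoc, hE, Real.div_rpow hr.le hrc.le]
      have hne : (r+c)^k ≠ 0 := (Real.rpow_pos_of_pos hrc k).ne'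
      field_simp
    · rw [gammaPDF_of_neg hz, gammaPDF_of_neg hz, zero_mul, mul_zero]
  rw [lintegral_congr hpt, lintegral_const_mul _ hm2,
    lintegral_gammaPDF_eq_one hk hrc, mul_one]

lemma aux_iff {θ κ z v : ℝ} (c : ℝ) (hθ : 0 < θ) (hκ : 0 < κ) (hz : 0 < z) (hv : 0 ≤ v) :
    (c < (1 / κ) * Real.log ((θ / z) * v + 1)
      ↔ ((Real.exp (κ * c) - 1) / θ) * z < v) := by
  have hX : 0 < (θ / z) * v + 1 := by positivity
  rw [one_div_mul_eq_div, lt_div_iff₀ hκ, Real.lt_log_iff_exp_lt hX, mul_comm c κ,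
    div_mul_eq_mul_div θ z v, ← sub_lt_iff_lt_add, lt_div_iff₀ hz,
    div_mul_eq_mul_div, div_lt_iff₀ hθ, mul_comm v θ]

/-- With `Z ~ Gamma(1/θ, 1/θ)` and `V₀, V₁ ~ Exp(1)`, `Z, V₀, V₁` mutually
independent, `T⁰ = (1/θ)log((θ/Z)V₀ + 1)` and `T¹ = (1/(θe^β))log((θ/Z)V₁ + 1)` have
joint survival function `P(T⁰ > s, T¹ > u) = (e^{θs} + e^{θe^β u} − 1)^{−1/θ}`. -/
theorem stmt12 {Ω : Type*} [MeasurableSpace Ω] (μ : Measure Ω) [IsProbabilityMeasure μ]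
    (θ β : ℝ) (hθ : 0 < θ)
    (Z V₀ V₁ : Ω → ℝ)
    (hZmeas : Measurable Z) (hV₀meas : Measurable V₀) (hV₁meas : Measurable V₁)
    (hZ : Measure.map Z μ = gammaMeasure (1 / θ) (1 / θ))
    (hV₀ : Measure.map V₀ μ = expMeasure 1)
    (hV₁ : Measure.map V₁ μ = expMeasure 1)
    (hindep : iIndepFun
      ![Z, V₀, V₁] μ)
    (T0 T1 : Ω → ℝ)
    (hT0 : ∀ ω, T0 ω = (1 / θ) * Real.log ((θ / Z ω) * V₀ ω + 1))
    (hT1 : ∀ ω, T1 ω = (1 / (θ * Real.exp β)) * Real.log ((θ / Z ω) * V₁ ω + 1)) :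
    ∀ s u : ℝ, 0 ≤ s → 0 ≤ u →
      μ {ω | s < T0 ω ∧ u < T1 ω}
        = ENNReal.ofReal
            ((Real.exp (θ * s) + Real.exp (θ * Real.exp β * u) - 1) ^ (-(1 / θ))) := by
  intro s u hs hu
  haveI := isProbabilityMeasure_expMeasure one_pos
  haveI := isProbabilityMeasure_gammaMeasure (a := 1/θ) (r := 1/θ) (by positivity) (by positivity)
  set e1 : ℝ := Real.exp (θ * s) with he1
  set e2 : ℝ := Real.exp (θ * Real.exp β * u) with he2
  have h1le : (1:ℝ) ≤ e1 := Real.one_le_exp (by positivity)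
  have h2le : (1:ℝ) ≤ e2 := Real.one_le_exp (by positivity)
  set a : ℝ := (e1 - 1) / θ with ha_def
  set b : ℝ := (e2 - 1) / θ with hb_def
  have ha : 0 ≤ a := by apply div_nonneg _ hθ.le; linarith
  have hb : 0 ≤ b := by apply div_nonneg _ hθ.le; linarith
  -- a.e. positivity facts
  have hZpos : ∀ᵐ ω ∂μ, 0 < Z ω := by
    rw [ae_iff]
    have hset : {ω | ¬ 0 < Z ω} = Z ⁻¹' (Set.Iic 0) := by ext ω; simp [not_lt]
    rw [hset, ← Measure.map_apply hZmeas measurableSet_Iic, hZ, gammaMeasure_Iic_zero]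
  have hV0ae : ∀ᵐ ω ∂μ, 0 ≤ V₀ ω := by
    rw [ae_iff]
    have hset : {ω | ¬ 0 ≤ V₀ ω} = V₀ ⁻¹' (Set.Iio 0) := by ext ω; simp [not_le]
    rw [hset, ← Measure.map_apply hV₀meas measurableSet_Iio, hV₀]
    exact gammaMeasure_Iio_zero 1 1
  have hV1ae : ∀ᵐ ω ∂μ, 0 ≤ V₁ ω := by
    rw [ae_iff]
    have hset : {ω | ¬ 0 ≤ V₁ ω} = V₁ ⁻¹' (Set.Iio 0) := by ext ω; simp [not_le]
    rw [hset, ← Measure.map_apply hV₁meas measurableSet_Iio, hV₁]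
    exact gammaMeasure_Iio_zero 1 1
  -- rewrite the event
  have hsets : {ω | s < T0 ω ∧ u < T1 ω} =ᵐ[μ] {ω | a * Z ω < V₀ ω ∧ b * Z ω < V₁ ω} := by
    rw [Filter.eventuallyEq_set]
    filter_upwards [hZpos, hV0ae, hV1ae] with ω hz h0 h1
    simp only [Set.mem_setOf_eq, hT0 ω, hT1 ω]
    have i0 := aux_iff (θ := θ) (κ := θ) s hθ hθ hz h0
    have i1 := aux_iff (θ := θ) (κ := θ * Real.exp β) u hθ (by positivity) hz h1
    rw [i0, i1, ha_def, hb_def, he1, he2]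
  have h1 : μ {ω | s < T0 ω ∧ u < T1 ω} = μ {ω | a * Z ω < V₀ ω ∧ b * Z ω < V₁ ω} :=
    measure_congr hsets
  -- independence and pushforward
  have h01 : IndepFun V₀ V₁ μ := by
    have h := hindep.indepFun (show (1 : Fin 3) ≠ 2 by decide)
    simpa using h
  have hmapVV : μ.map (fun ω => (V₀ ω, V₁ ω)) = (expMeasure 1).prod (expMeasure 1) := by
    rw [(indepFun_iff_map_prod_eq_prod_map_map hV₀meas.aemeasurable
      hV₁meas.aemeasurable).1 h01, hV₀, hV₁]
  have hZVV : IndepFun Z (fun ω => (V₀ ω, V₁ ω)) μ := by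
    have hmeas : ∀ i, Measurable (![Z, V₀, V₁] i) := by
      intro i; fin_cases i <;> simpa
    have h := hindep.indepFun_prodMk hmeas 1 2 0 (by decide) (by decide)
    exact (by simpa using h : IndepFun (fun ω => (V₀ ω, V₁ ω)) Z μ).symm
  have hmapW : μ.map (fun ω => (Z ω, (V₀ ω, V₁ ω)))
      = (gammaMeasure (1/θ) (1/θ)).prod ((expMeasure 1).prod (expMeasure 1)) := by
    rw [(indepFun_iff_map_prod_eq_prod_map_map hZmeas.aemeasurable
      ((hV₀meas.prodMk hV₁meas).aemeasurable)).1 hZVV, hZ, hmapVV]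
  -- compute via the product measure
  have hSmeas : MeasurableSet {p : ℝ × ℝ × ℝ | a * p.1 < p.2.1 ∧ b * p.1 < p.2.2} :=
    (measurableSet_lt (measurable_fst.const_mul a)
        (measurable_fst.comp measurable_snd)).inter
      (measurableSet_lt (measurable_fst.const_mul b)
        (measurable_snd.comp measurable_snd))
  have h2 : μ {ω | a * Z ω < V₀ ω ∧ b * Z ω < V₁ ω}
      = (μ.map (fun ω => (Z ω, (V₀ ω, V₁ ω))))
          {p : ℝ × ℝ × ℝ | a * p.1 < p.2.1 ∧ b * p.1 < p.2.2} := by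
    rw [Measure.map_apply (hZmeas.prodMk (hV₀meas.prodMk hV₁meas)) hSmeas]
    rfl
  rw [h1, h2, hmapW, Measure.prod_apply hSmeas]
  have haeg : ∀ᵐ z ∂(gammaMeasure (1/θ) (1/θ)), 0 ≤ z := by
    rw [ae_iff]
    have hset : {z : ℝ | ¬ 0 ≤ z} = Set.Iio 0 := by ext z; simp [not_le]
    rw [hset]; exact gammaMeasure_Iio_zero _ _
  have hcongr : ∫⁻ z, ((expMeasure 1).prod (expMeasure 1))
        (Prod.mk z ⁻¹' {p : ℝ × ℝ × ℝ | a * p.1 < p.2.1 ∧ b * p.1 < p.2.2})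
        ∂(gammaMeasure (1/θ) (1/θ))
      = ∫⁻ z, ENNReal.ofReal (Real.exp (-((a + b) * z))) ∂(gammaMeasure (1/θ) (1/θ)) := by
    apply lintegral_congr_ae
    filter_upwards [haeg] with z hz
    have hpre : Prod.mk z ⁻¹' {p : ℝ × ℝ × ℝ | a * p.1 < p.2.1 ∧ b * p.1 < p.2.2}
        = Set.Ioi (a * z) ×ˢ Set.Ioi (b * z) := by
      ext ⟨p1, p2⟩; simp [Set.mem_setOf_eq]
    rw [hpre, Measure.prod_prod, expMeasure_Ioi _ (mul_nonneg ha hz),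
      expMeasure_Ioi _ (mul_nonneg hb hz), ← ENNReal.ofReal_mul (Real.exp_nonneg _),
      ← Real.exp_add]
    congr 1
    ring
  rw [hcongr, gamma_laplace (by positivity) (by positivity) (by positivity : (0:ℝ) ≤ a + b)]
  congr 1
  have hE : (0:ℝ) < e1 + e2 - 1 := by linarith
  have hq : (1/θ) / (1/θ + (a + b)) = (e1 + e2 - 1)⁻¹ := by
    rw [ha_def, hb_def]
    field_simp
    rw [show (1 + (e1 - 1 + (e2 - 1))) = e1 + e2 - 1 from by ring, div_self hE.ne']
  rw [hq, Real.inv_rpow hE.le, ← Real.rpow_neg hE.le]
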